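/- Let K be a field of characteristic ≠ 2 and let F = a1·x1^2 + a2·x2^2 + a3·x3^2 + a4·x4^2, G = b1·x1^2 + b2·x2^2 + b3·x3^2 + b4·x4^2 in S = K[x1,x2,x3,x4]. Let W0 = span of the squarefree monomials x_i x_j (i < j) and W = W0 + span{F, G}. If (1) all 2×2 minors of the matrix with rows (a1,a2,a3,a4) and (b1,b2,b3,b4) are nonzero, and (2) the 3×4 matrix with rows (a1^2,a2^2,a3^2,a4^2), (b1^2,b2^2,b3^2,b4^2), (a1b1,a2b2,a3b3,a4b4) has rank 3, then dim_K W = 8 and dim_K W^2 = 34. -/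

import Mathlib

open MvPolynomial Submodule

namespace St19

variable (K : Type*) [Field K]

noncomputable def m (f : Fin 4 → ℕ) : MvPolynomial (Fin 4) K :=
  monomial (Finsupp.equivFunOnFinite.symm f) 1

def δ (i : Fin 4) : Fin 4 → ℕ := fun j => if j = i then 1 else 0
def ε (i : Fin 4) : Fin 4 → ℕ := fun j => if j = i then 2 else 0
def q4 (i : Fin 4) : Fin 4 → ℕ := fun j => if j = i then 4 else 0

noncomputable def cf (g : Fin 4 → ℕ) : MvPolynomial (Fin 4) K →ₗ[K] K :=
  lcoeff K (Finsupp.equivFunOnFinite.symm g)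

variable {K}

lemma symm_add (f g : Fin 4 → ℕ) :
    Finsupp.equivFunOnFinite.symm (f + g) =
      Finsupp.equivFunOnFinite.symm f + Finsupp.equivFunOnFinite.symm g := by
  apply Finsupp.equivFunOnFinite.injective
  simp
  rfl

lemma m_mul (f g : Fin 4 → ℕ) : m K f * m K g = m K (f + g) := by
  simp [m, monomial_mul, symm_add]

lemma symm_ite (i : Fin 4) (n : ℕ) :
    Finsupp.equivFunOnFinite.symm (fun j => if j = i then n else 0) = Finsupp.single i n := by
  ext j
  simp [Finsupp.single_apply, eq_comm]

lemma X_eq (i : Fin 4) : (X i : MvPolynomial (Fin 4) K) = m K (δ i) := by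
  unfold m δ
  rw [symm_ite, X]

lemma coeff_m (f g : Fin 4 → ℕ) :
    cf K g (m K f) = if f = g then 1 else 0 := by
  rw [m, cf, lcoeff_apply, coeff_monomial]
  by_cases h : f = g <;> simp [h, Finsupp.equivFunOnFinite.symm.injective.eq_iff]

lemma CX_sq (c : K) (i : Fin 4) : C c * X i ^ 2 = c • m K (ε i) := by
  have h1 : (X i : MvPolynomial (Fin 4) K) ^ 2 = m K (ε i) := by
    rw [sq, X_eq, m_mul]
    congr 1
    funext j
    simp only [δ, ε, Pi.add_apply]
    split <;> rfl
  rw [h1, ← smul_eq_C_mul]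

lemma cf_sum (c : Fin 4 → K) (h : Fin 4 → Fin 4 → ℕ) (g : Fin 4 → ℕ) :
    cf K g (∑ k, c k • m K (h k)) = ∑ k, if h k = g then c k else 0 := by
  rw [map_sum]
  congr 1
  funext k
  rw [map_smul, coeff_m, smul_eq_mul]
  by_cases hk : h k = g <;> simp [hk]

lemma cf_prod (c d : Fin 4 → K) (g : Fin 4 → ℕ) :
    cf K g ((∑ k, c k • m K (ε k)) * (∑ l, d l • m K (ε l))) =
      ∑ k, ∑ l, if ε k + ε l = g then c k * d l else 0 := by
  rw [Finset.sum_mul_sum]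
  rw [map_sum]
  congr 1
  funext k
  rw [map_sum]
  congr 1
  funext l
  rw [smul_mul_smul_comm, m_mul, map_smul, coeff_m, smul_eq_mul]
  by_cases hk : ε k + ε l = g <;> simp [hk]

def D6 : Finset (Fin 4 → ℕ) :=
  {![1,1,0,0], ![1,0,1,0], ![1,0,0,1], ![0,1,1,0], ![0,1,0,1], ![0,0,1,1]}

def D : Finset (Fin 4 → ℕ) :=
  {![3,1,0,0], ![3,0,1,0], ![3,0,0,1], ![2,2,0,0], ![2,1,1,0], ![2,1,0,1], ![2,0,2,0],
   ![2,0,1,1], ![2,0,0,2], ![1,3,0,0], ![1,2,1,0], ![1,2,0,1], ![1,1,2,0], ![1,1,1,1],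
   ![1,1,0,2], ![1,0,3,0], ![1,0,2,1], ![1,0,1,2], ![1,0,0,3], ![0,3,1,0], ![0,3,0,1],
   ![0,2,2,0], ![0,2,1,1], ![0,2,0,2], ![0,1,3,0], ![0,1,2,1], ![0,1,1,2], ![0,1,0,3],
   ![0,0,3,1], ![0,0,2,2], ![0,0,1,3]}

lemma D6_card : D6.card = 6 := by decide
lemma D_card : D.card = 31 := by decide
lemma sf_mem : ∀ i j : Fin 4, i < j → δ i + δ j ∈ D6 := by decide
lemma sfe_mem : ∀ i j k : Fin 4, i ≠ j → δ i + δ j + ε k ∈ D := by decide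
lemma D6_add_mem : ∀ f ∈ D6, ∀ g ∈ D6, f + g ∈ D := by decide
lemma D_ne_q4 : ∀ d ∈ D, ∀ i : Fin 4, d ≠ q4 i := by decide
lemma D6_ne_ε : ∀ d ∈ D6, ∀ i : Fin 4, d ≠ ε i := by decide
lemma eps_eq_q4 : ∀ i k l : Fin 4, ε k + ε l = q4 i ↔ k = i ∧ l = i := by decide
lemma eps_eq_eps : ∀ i k : Fin 4, ε k = ε i ↔ k = i := by decide
lemma D_decomp : ∀ d ∈ D,
    (∃ f ∈ D6, ∃ g ∈ D6, f + g = d) ∨ (∃ i j : Fin 4, i ≠ j ∧ d = δ i + δ j + ε i) := by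
  decide
lemma D6_decomp : ∀ f ∈ D6, ∃ i j : Fin 4, i < j ∧ f = δ i + δ j := by decide
lemma cube_split : ∀ i j k : Fin 4, i ≠ j → k ≠ i → k ≠ j →
    δ i + δ j + ε k = (δ i + δ k) + (δ j + δ k) := by decide



variable {K : Type*} [Field K]

section General

variable {V W' : Type*} [AddCommGroup V] [Module K V] [AddCommGroup W'] [Module K W']

lemma disj_of_comp {ι : Type*} [Fintype ι] (φ : V →ₗ[K] W') (v : ι → V)
    (hv : LinearIndependent K (φ ∘ v)) (U : Submodule K V)
    (hU : U ≤ LinearMap.ker φ) : U ⊓ span K (Set.range v) = ⊥ := by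
  rw [eq_bot_iff]
  rintro x ⟨hx1, hx2⟩
  obtain ⟨c, rfl⟩ := mem_span_range_iff_exists_fun K |>.mp hx2
  have h0 : φ (∑ i, c i • v i) = 0 := hU hx1
  rw [map_sum] at h0
  simp_rw [map_smul] at h0
  have hc : ∀ i, c i = 0 := Fintype.linearIndependent_iff.mp hv c (by simpa [Function.comp] using h0)
  simp [hc]

lemma finrank_sup_of_disj (U T : Submodule K V) [FiniteDimensional K U] [FiniteDimensional K T]
    {u t : ℕ} (hU : Module.finrank K U = u) (hT : Module.finrank K T = t)
    (h : U ⊓ T = ⊥) : Module.finrank K ↥(U ⊔ T) = u + t := by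
  have := Submodule.finrank_sup_add_finrank_inf_eq U T
  rw [h, finrank_bot, hU, hT] at this
  omega

end General

lemma finrank_span_m (Dset : Finset (Fin 4 → ℕ)) :
    Module.finrank K (span K ((m K) '' (Dset : Set (Fin 4 → ℕ)))) = Dset.card := by
  rw [Set.image_eq_range]
  have hinj : Function.Injective (fun d : ↥(Dset : Set (Fin 4 → ℕ)) =>
      Finsupp.equivFunOnFinite.symm (d : Fin 4 → ℕ)) :=
    Finsupp.equivFunOnFinite.symm.injective.comp Subtype.val_injective
  have hli : LinearIndependent K (fun d : ↥(Dset : Set (Fin 4 → ℕ)) => m K ↑d) :=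
    (MvPolynomial.basisMonomials (Fin 4) K).linearIndependent.comp _ hinj
  rw [finrank_span_eq_card hli]
  simp

end St19

namespace St19
variable {K : Type*} [Field K]

lemma double_ite (c : Fin 4 → Fin 4 → K) (i : Fin 4) :
    (∑ k, ∑ l, if k = i ∧ l = i then c k l else 0) = c i i := by
  rw [Finset.sum_eq_single i]
  · rw [Finset.sum_eq_single i]
    · simp
    · intro l _ hl; simp [hl]
    · simp
  · intro k _ hk
    apply Finset.sum_eq_zero
    intro l _
    simp [hk]
  · simp

end St19

open St19

theorem stmt_19 (K : Type*) [Field K] (hchar : (2 : K) ≠ 0)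
    (a b : Fin 4 → K)
    (F G : MvPolynomial (Fin 4) K)
    (hF : F = ∑ i : Fin 4, C (a i) * X i ^ 2)
    (hG : G = ∑ i : Fin 4, C (b i) * X i ^ 2)
    (W0 W : Submodule K (MvPolynomial (Fin 4) K))
    (hW0 : W0 = Submodule.span K
      {p : MvPolynomial (Fin 4) K | ∃ i j : Fin 4, i < j ∧ p = X i * X j})
    (hW : W = W0 ⊔ Submodule.span K {F, G})
    (hminors : ∀ i j : Fin 4, i < j → a i * b j - a j * b i ≠ 0)
    (hrank : (Matrix.of ![fun i => a i ^ 2, fun i => b i ^ 2,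
        fun i => a i * b i] : Matrix (Fin 3) (Fin 4) K).rank = 3) :
    Module.finrank K ↥W = 8 ∧ Module.finrank K ↥(W * W) = 34 := by
  classical
  set S0 : Set (MvPolynomial (Fin 4) K) :=
    {p : MvPolynomial (Fin 4) K | ∃ i j : Fin 4, i < j ∧ p = X i * X j} with hS0
  -- representations
  have hF' : F = ∑ i, a i • m K (ε i) := by
    rw [hF]; exact Finset.sum_congr rfl fun i _ => CX_sq _ _
  have hG' : G = ∑ i, b i • m K (ε i) := by
    rw [hG]; exact Finset.sum_congr rfl fun i _ => CX_sq _ _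
  have hminors' : ∀ i j : Fin 4, i ≠ j → a i * b j - a j * b i ≠ 0 := by
    intro i j hij
    rcases hij.lt_or_gt with h | h
    · exact hminors i j h
    · intro hc; exact hminors j i h (by linear_combination -hc)
  -- basic memberships
  have hXW0 : ∀ i j : Fin 4, i ≠ j → X i * X j ∈ W0 := by
    intro i j hij
    rcases hij.lt_or_gt with h | h
    · exact hW0 ▸ subset_span ⟨i, j, h, rfl⟩
    · rw [mul_comm]
      exact hW0 ▸ subset_span ⟨j, i, h, rfl⟩
  have hW0W : W0 ≤ W := hW ▸ le_sup_left
  have hFW : F ∈ W := hW ▸ (le_sup_right : _ ≤ W0 ⊔ Submodule.span K {F, G})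
    (subset_span (by simp))
  have hGW : G ∈ W := hW ▸ (le_sup_right : _ ≤ W0 ⊔ Submodule.span K {F, G})
    (subset_span (by simp))
  have hmW0 : ∀ f ∈ D6, m K f ∈ W0 := by
    intro f hf
    obtain ⟨i, j, hij, rfl⟩ := D6_decomp f hf
    rw [← m_mul, ← X_eq, ← X_eq]
    exact hXW0 i j hij.ne
  have hS0D6 : S0 = (m K) '' (D6 : Set (Fin 4 → ℕ)) := by
    ext p
    constructor
    · rintro ⟨i, j, hij, rfl⟩
      exact ⟨δ i + δ j, sf_mem i j hij, by rw [X_eq, X_eq, m_mul]⟩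
    · rintro ⟨f, hf, rfl⟩
      obtain ⟨i, j, hij, rfl⟩ := D6_decomp f hf
      exact ⟨i, j, hij, by rw [X_eq, X_eq, m_mul]⟩
  -- expansion of (X i * X j) * F
  have expand : ∀ (c : Fin 4 → K) (i j : Fin 4),
      (X i * X j) * (∑ k, c k • m K (ε k)) = ∑ k, c k • m K (δ i + δ j + ε k) := by
    intro c i j
    rw [X_eq, X_eq, m_mul, Finset.mul_sum]
    exact Finset.sum_congr rfl fun k _ => by rw [mul_smul_comm, m_mul]
  -- the submodules
  set U : Submodule K (MvPolynomial (Fin 4) K) := span K ((m K) '' (D : Set (Fin 4 → ℕ))) with hU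
  set t : Fin 3 → MvPolynomial (Fin 4) K := ![F * F, G * G, F * G] with ht
  set T : Submodule K (MvPolynomial (Fin 4) K) := span K (Set.range t) with hT
  set U6 : Submodule K (MvPolynomial (Fin 4) K) := span K ((m K) '' (D6 : Set (Fin 4 → ℕ)))
    with hU6
  set t2 : Fin 2 → MvPolynomial (Fin 4) K := ![F, G] with ht2
  have hFGrange : ({F, G} : Set (MvPolynomial (Fin 4) K)) = Set.range t2 := by
    ext x
    simp only [ht2, Set.mem_insert_iff, Set.mem_singleton_iff, Set.mem_range,
      Fin.exists_fin_two, Matrix.cons_val_zero, Matrix.cons_val_one, Matrix.head_cons]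
    tauto
  -- the coefficient functionals
  set φ : MvPolynomial (Fin 4) K →ₗ[K] (Fin 4 → K) :=
    LinearMap.pi (fun i => cf K (q4 i)) with hφ
  set M : Matrix (Fin 3) (Fin 4) K :=
    Matrix.of ![fun i => a i ^ 2, fun i => b i ^ 2, fun i => a i * b i] with hM
  have hφprod : ∀ (c d : Fin 4 → K) (i : Fin 4),
      φ ((∑ k, c k • m K (ε k)) * (∑ l, d l • m K (ε l))) i = c i * d i := by
    intro c d i
    rw [hφ, LinearMap.pi_apply, cf_prod]
    simp_rw [eps_eq_q4]
    exact double_ite (fun k l => c k * d l) i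
  have hφt : φ ∘ t = fun j => M j := by
    funext j
    fin_cases j
    · funext i
      show φ (F * F) i = a i ^ 2
      rw [hF', hφprod]; ring
    · funext i
      show φ (G * G) i = b i ^ 2
      rw [hG', hφprod]; ring
    · funext i
      show φ (F * G) i = a i * b i
      rw [hF', hG', hφprod]
  have hrows : LinearIndependent K (fun j => M j) := by
    rw [linearIndependent_iff_card_eq_finrank_span, Set.finrank]
    change _ = Module.finrank K (span K (Set.range M.row))
    rw [← Matrix.rank_eq_finrank_span_row, hM, hrank]
    simp
  have htli : LinearIndependent K t := (hφt ▸ hrows).of_comp φ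
  have hUker : U ≤ LinearMap.ker φ := by
    rw [hU, span_le]
    rintro _ ⟨d, hd, rfl⟩
    rw [SetLike.mem_coe, LinearMap.mem_ker]
    funext i
    rw [hφ, LinearMap.pi_apply, coeff_m]
    simp [D_ne_q4 d hd i]
  have hdisj : U ⊓ T = ⊥ := disj_of_comp φ t (hφt ▸ hrows) U hUker
  -- cube monomials are in W * W
  have hcube : ∀ i j : Fin 4, i ≠ j → m K (δ i + δ j + ε i) ∈ W * W := by
    intro i j hij
    have hd : b j * a i - a j * b i ≠ 0 := by
      rw [show b j * a i - a j * b i = a i * b j - a j * b i by ring]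
      exact hminors' i j hij
    have hXijF : (X i * X j) * F ∈ W * W :=
      Submodule.mul_mem_mul (hW0W (hXW0 i j hij)) hFW
    have hXijG : (X i * X j) * G ∈ W * W :=
      Submodule.mul_mem_mul (hW0W (hXW0 i j hij)) hGW
    have key : (∑ k, (b j * a k - a j * b k) • m K (δ i + δ j + ε k))
        = b j • ((X i * X j) * F) - a j • ((X i * X j) * G) := by
      rw [hF', hG', expand, expand, Finset.smul_sum, Finset.smul_sum,
        ← Finset.sum_sub_distrib]
      exact Finset.sum_congr rfl fun k _ => by rw [smul_smul, smul_smul, ← sub_smul]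
    have split : (∑ k, (b j * a k - a j * b k) • m K (δ i + δ j + ε k))
        = (b j * a i - a j * b i) • m K (δ i + δ j + ε i)
          + ∑ k ∈ Finset.univ.erase i, (b j * a k - a j * b k) • m K (δ i + δ j + ε k) :=
      (Finset.add_sum_erase _ _ (Finset.mem_univ i)).symm
    have hrest : (∑ k ∈ Finset.univ.erase i,
        (b j * a k - a j * b k) • m K (δ i + δ j + ε k)) ∈ W * W := by
      apply Submodule.sum_mem
      intro k hk
      have hki : k ≠ i := Finset.ne_of_mem_erase hk
      by_cases hkj : k = j
      · have hz : b j * a k - a j * b k = 0 := by rw [hkj]; ring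
        rw [hz, zero_smul]
        exact zero_mem _
      · have e1 : m K (δ i + δ k) * m K (δ j + δ k) = m K (δ i + δ j + ε k) := by
          rw [m_mul, cube_split i j k hij hki hkj]
        apply Submodule.smul_mem
        rw [← e1]
        refine Submodule.mul_mem_mul (hW0W ?_) (hW0W ?_)
        · rw [← m_mul, ← X_eq, ← X_eq]; exact hXW0 i k (Ne.symm hki)
        · rw [← m_mul, ← X_eq, ← X_eq]; exact hXW0 j k (Ne.symm hkj)
    have hmem : (b j * a i - a j * b i) • m K (δ i + δ j + ε i) ∈ W * W := by
      have heq : (b j * a i - a j * b i) • m K (δ i + δ j + ε i)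
          = (b j • ((X i * X j) * F) - a j • ((X i * X j) * G))
            - ∑ k ∈ Finset.univ.erase i, (b j * a k - a j * b k) • m K (δ i + δ j + ε k) := by
        rw [← key, split]; abel
      rw [heq]
      exact sub_mem (sub_mem (Submodule.smul_mem _ _ hXijF) (Submodule.smul_mem _ _ hXijG)) hrest
    have hfin := Submodule.smul_mem (W * W) (b j * a i - a j * b i)⁻¹ hmem
    rwa [inv_smul_smul₀ hd] at hfin
  -- W * W = U ⊔ T
  have hWspan : W = span K (S0 ∪ {F, G}) := by
    rw [hW, hW0, span_union]
  have hUle : U ≤ U ⊔ T := le_sup_left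
  have hTle : T ≤ U ⊔ T := le_sup_right
  have hsqF : ∀ (i j : Fin 4), i ≠ j → ∀ c : Fin 4 → K,
      (X i * X j) * (∑ k, c k • m K (ε k)) ∈ U := by
    intro i j hij c
    rw [expand]
    exact Submodule.sum_mem _ fun k _ => Submodule.smul_mem _ _
      (subset_span ⟨_, sfe_mem i j k hij, rfl⟩)
  have hWW : W * W = U ⊔ T := by
    apply le_antisymm
    · rw [hWspan, span_mul_span, span_le]
      rintro x hx
      rw [Set.mem_mul] at hx
      obtain ⟨p, hp, q, hq, rfl⟩ := hx
      rcases hp with ⟨i, j, hij, rfl⟩ | hp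
      · rcases hq with ⟨k, l, hkl, rfl⟩ | hq
        · apply hUle
          have e1 : (X i * X j) * (X k * X l : MvPolynomial (Fin 4) K)
              = m K ((δ i + δ j) + (δ k + δ l)) := by
            rw [X_eq i, X_eq j, X_eq k, X_eq l, m_mul, m_mul, m_mul]
          rw [e1]
          exact subset_span ⟨_, D6_add_mem _ (sf_mem i j hij) _ (sf_mem k l hkl), rfl⟩
        · simp only [Set.mem_insert_iff, Set.mem_singleton_iff] at hq
          rcases hq with rfl | rfl
          · rw [hF']; exact hUle (hsqF i j hij.ne a)
          · rw [hG']; exact hUle (hsqF i j hij.ne b)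
      · simp only [Set.mem_insert_iff, Set.mem_singleton_iff] at hp
        rcases hq with ⟨k, l, hkl, rfl⟩ | hq
        · rcases hp with rfl | rfl
          · rw [mul_comm, hF']; exact hUle (hsqF k l hkl.ne a)
          · rw [mul_comm, hG']; exact hUle (hsqF k l hkl.ne b)
        · simp only [Set.mem_insert_iff, Set.mem_singleton_iff] at hq
          apply hTle
          rcases hp with rfl | rfl <;> rcases hq with rfl | rfl
          · exact subset_span ⟨0, rfl⟩
          · exact subset_span ⟨2, rfl⟩
          · rw [mul_comm]; exact subset_span ⟨2, rfl⟩
          · exact subset_span ⟨1, rfl⟩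
    · apply sup_le
      · rw [hU, span_le]
        rintro _ ⟨d, hd, rfl⟩
        rcases D_decomp d hd with ⟨f, hf, g, hg, hfg⟩ | ⟨i, j, hij, rfl⟩
        · rw [← hfg, ← m_mul]
          exact Submodule.mul_mem_mul (hW0W (hmW0 f hf)) (hW0W (hmW0 g hg))
        · exact hcube i j hij
      · rw [hT, span_le]
        rintro _ ⟨j, rfl⟩
        fin_cases j
        · exact Submodule.mul_mem_mul hFW hFW
        · exact Submodule.mul_mem_mul hGW hGW
        · exact Submodule.mul_mem_mul hFW hGW
  -- dimension of W * W
  haveI : FiniteDimensional K U := FiniteDimensional.span_of_finite K ((D.finite_toSet).image _)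
  haveI : FiniteDimensional K T := FiniteDimensional.span_of_finite K (Set.finite_range t)
  have hUr : Module.finrank K U = 31 := by rw [hU, finrank_span_m, D_card]
  have hTr : Module.finrank K T = 3 := by
    rw [hT, finrank_span_eq_card htli]; simp
  have hdim2 : Module.finrank K ↥(W * W) = 34 := by
    rw [hWW, finrank_sup_of_disj U T hUr hTr hdisj]
  -- now part 1
  set φ2 : MvPolynomial (Fin 4) K →ₗ[K] (Fin 2 → K) :=
    LinearMap.pi ![cf K (ε 0), cf K (ε 1)] with hφ2
  set N : Fin 2 → Fin 2 → K := ![![a 0, a 1], ![b 0, b 1]] with hN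
  have hcf_sum' : ∀ (c : Fin 4 → K) (i : Fin 4), cf K (ε i) (∑ k, c k • m K (ε k)) = c i := by
    intro c i
    rw [cf_sum]
    simp_rw [eps_eq_eps]
    simp
  have hφ2t : φ2 ∘ t2 = fun j => N j := by
    funext j
    fin_cases j <;> funext i <;> fin_cases i <;>
      simp only [ht2, hN, Function.comp_apply, Matrix.cons_val_zero, Matrix.cons_val_one,
        Matrix.head_cons, Fin.mk_zero, Fin.mk_one, Fin.isValue, hφ2, LinearMap.pi_apply]
    · rw [hF', hcf_sum']
    · rw [hF', hcf_sum']
    · rw [hG', hcf_sum']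
    · rw [hG', hcf_sum']
  have hNrows : LinearIndependent K (fun j => N j) := by
    rw [Fintype.linearIndependent_iff]
    intro g hg
    have h0 := congrFun hg 0
    have h1 := congrFun hg 1
    simp only [Fin.sum_univ_two, hN, Pi.add_apply, Pi.smul_apply, Matrix.cons_val_zero,
      Matrix.cons_val_one, Matrix.head_cons, smul_eq_mul, Pi.zero_apply, Fin.isValue] at h0 h1
    have hd := hminors 0 1 (by decide)
    have hg0 : g 0 = 0 := by
      have : g 0 * (a 0 * b 1 - a 1 * b 0) = 0 := by linear_combination b 1 * h0 - b 0 * h1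
      exact (mul_eq_zero.mp this).resolve_right hd
    have hg1 : g 1 = 0 := by
      have : g 1 * (a 0 * b 1 - a 1 * b 0) = 0 := by linear_combination a 0 * h1 - a 1 * h0
      exact (mul_eq_zero.mp this).resolve_right hd
    intro i
    fin_cases i
    · exact hg0
    · exact hg1
  have ht2li : LinearIndependent K t2 := (hφ2t ▸ hNrows).of_comp φ2
  have hU6ker : U6 ≤ LinearMap.ker φ2 := by
    rw [hU6, span_le]
    rintro _ ⟨d, hd, rfl⟩
    rw [SetLike.mem_coe, LinearMap.mem_ker]
    funext i
    fin_cases i <;>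
      simp only [hφ2, LinearMap.pi_apply, Matrix.cons_val_zero, Matrix.cons_val_one,
        Matrix.head_cons, Pi.zero_apply, Fin.mk_zero, Fin.mk_one, Fin.isValue] <;>
      rw [coeff_m] <;>
      simp [D6_ne_ε d hd]
  have hdisj6 : U6 ⊓ span K (Set.range t2) = ⊥ := disj_of_comp φ2 t2 (hφ2t ▸ hNrows) U6 hU6ker
  have hWsup : W = U6 ⊔ span K (Set.range t2) := by
    rw [hW, hW0, hS0D6, hFGrange, ← hU6]
  haveI : FiniteDimensional K U6 :=
    FiniteDimensional.span_of_finite K ((D6.finite_toSet).image _)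
  haveI : FiniteDimensional K (span K (Set.range t2)) :=
    FiniteDimensional.span_of_finite K (Set.finite_range t2)
  have hU6r : Module.finrank K U6 = 6 := by rw [hU6, finrank_span_m, D6_card]
  have ht2r : Module.finrank K (span K (Set.range t2)) = 2 := by
    rw [finrank_span_eq_card ht2li]; simp
  have hdim1 : Module.finrank K ↥W = 8 := by
    rw [hWsup, finrank_sup_of_disj _ _ hU6r ht2r hdisj6]
  exact ⟨hdim1, hdim2⟩
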